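/- Let A = (a_{ij}) ∈ M_n(ℝ₊) and let 1 ≤ k < n be a positive integer. Then W_max^k(A) = [c, d], where c = min{ max_{j=1,…,k} a_{i_j i_j} : 1 ≤ i_1 < i_2 < ⋯ < i_k ≤ n } and d = max_{1≤i,j≤n} a_{ij}. -/

import Mathlib

open Matrix

/-- Max-algebra matrix product: `(A ⊗ B) i j = max_p (A i p * B p j)`. -/
noncomputable def maxMul {n m l : ℕ} (A : Matrix (Fin n) (Fin m) ℝ)
    (B : Matrix (Fin m) (Fin l) ℝ) : Matrix (Fin n) (Fin l) ℝ :=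
  Matrix.of fun i j => ⨆ p, A i p * B p j

/-- Max trace: `tr⊗(A) = max_i A i i`. -/
noncomputable def trMax {n : ℕ} (A : Matrix (Fin n) (Fin n) ℝ) : ℝ := ⨆ i, A i i

/-- The set 𝒳_{n×k} of nonnegative `n×k` matrices with `Xᵀ ⊗ X = I_k`. -/
def Xset (n k : ℕ) : Set (Matrix (Fin n) (Fin k) ℝ) :=
  {X | (∀ i j, 0 ≤ X i j) ∧ maxMul Xᵀ X = 1}

/-- The max `k`-numerical range `W_max^k(A) = { tr⊗(Xᵀ⊗A⊗X) : X ∈ 𝒳_{n×k} }`. -/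
noncomputable def Wmax {n : ℕ} (k : ℕ) (A : Matrix (Fin n) (Fin n) ℝ) : Set ℝ :=
  {z | ∃ X ∈ Xset n k, z = trMax (maxMul (maxMul Xᵀ A) X)}

section Aux

variable {n k : ℕ}

private lemma le_csup {α : Type*} [Fintype α] (f : α → ℝ) (i : α) :
    f i ≤ ⨆ j, f j :=
  le_ciSup (Set.Finite.bddAbove (Set.finite_range f)) i

private lemma csup_nonneg {α : Type*} [Fintype α] [Nonempty α] {f : α → ℝ}
    (h : ∀ i, 0 ≤ f i) : 0 ≤ ⨆ j, f j :=
  le_trans (h (Classical.arbitrary α)) (le_csup f _)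

private lemma le_triple [NeZero n] [NeZero k] (f : Fin k → Fin n → Fin n → ℝ)
    (j : Fin k) (q p : Fin n) :
    f j q p ≤ ⨆ j, ⨆ q, ⨆ p, f j q p :=
  le_trans (le_csup (f j q) p)
    (le_trans (le_csup (fun q => ⨆ p, f j q p) q) (le_csup (fun j => ⨆ q, ⨆ p, f j q p) j))

private lemma value_eq [NeZero n] [NeZero k] (A : Matrix (Fin n) (Fin n) ℝ)
    (X : Matrix (Fin n) (Fin k) ℝ) (hX : ∀ i j, 0 ≤ X i j) :
    trMax (maxMul (maxMul Xᵀ A) X) = ⨆ j, ⨆ q, ⨆ p, X p j * A p q * X q j := by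
  simp only [trMax, maxMul, Matrix.of_apply, Matrix.transpose_apply]
  exact iSup_congr fun j => iSup_congr fun q => Real.iSup_mul_of_nonneg (hX q j) _

private lemma diag_one [NeZero n] {X : Matrix (Fin n) (Fin k) ℝ}
    (hX : X ∈ Xset n k) (j : Fin k) : (⨆ p, X p j * X p j) = 1 := by
  have h := Matrix.ext_iff.2 hX.2 j j
  simpa [maxMul, Matrix.one_apply] using h

private lemma entry_le_one [NeZero n] {X : Matrix (Fin n) (Fin k) ℝ}
    (hX : X ∈ Xset n k) (i : Fin n) (j : Fin k) : X i j ≤ 1 := by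
  have h3 : X i j * X i j ≤ 1 := (diag_one hX j) ▸ le_csup (fun p => X p j * X p j) i
  nlinarith [hX.1 i j]

private lemma exists_pivot [NeZero n] {X : Matrix (Fin n) (Fin k) ℝ}
    (hX : X ∈ Xset n k) (j : Fin k) : ∃ p, X p j = 1 := by
  obtain ⟨p, hp⟩ := Finite.exists_max (fun p => X p j * X p j)
  refine ⟨p, ?_⟩
  have h1 : X p j * X p j = 1 :=
    le_antisymm ((diag_one hX j) ▸ le_csup (fun p => X p j * X p j) p)
      ((diag_one hX j) ▸ ciSup_le hp)
  nlinarith [hX.1 p j]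

private lemma col_orth [NeZero n] {X : Matrix (Fin n) (Fin k) ℝ}
    (hX : X ∈ Xset n k) {j l : Fin k} (hjl : j ≠ l) (i : Fin n) :
    X i j * X i l ≤ 0 := by
  have h := Matrix.ext_iff.2 hX.2 j l
  have h2 : (⨆ p, X p j * X p l) = 0 := by
    simpa [maxMul, Matrix.one_apply, hjl] using h
  exact h2 ▸ le_csup (fun p => X p j * X p l) i

private lemma val_le_d [NeZero n] [NeZero k] (A : Matrix (Fin n) (Fin n) ℝ)
    (hA : ∀ i j, 0 ≤ A i j) {X : Matrix (Fin n) (Fin k) ℝ} (hX : X ∈ Xset n k) :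
    trMax (maxMul (maxMul Xᵀ A) X) ≤ ⨆ i, ⨆ j, A i j := by
  rw [value_eq A X hX.1]
  refine ciSup_le fun j => ciSup_le fun q => ciSup_le fun p => ?_
  have h1 : X p j * A p q * X q j ≤ A p q :=
    le_trans (mul_le_of_le_one_right (mul_nonneg (hX.1 p j) (hA p q)) (entry_le_one hX q j))
      (mul_le_of_le_one_left (hA p q) (entry_le_one hX p j))
  exact h1.trans (le_trans (le_csup (fun l => A p l) q) (le_csup (fun i => ⨆ l, A i l) p))

private lemma c_le_val [NeZero n] [NeZero k] (A : Matrix (Fin n) (Fin n) ℝ)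
    {X : Matrix (Fin n) (Fin k) ℝ} (hX : X ∈ Xset n k) :
    (⨅ S : {S : Finset (Fin n) // S.card = k}, ⨆ j : {x : Fin n // x ∈ S.1}, A j.1 j.1)
      ≤ trMax (maxMul (maxMul Xᵀ A) X) := by
  choose p hp using exists_pivot hX
  have hinj : Function.Injective p := by
    intro j l hjl
    by_contra hne
    have h := col_orth hX hne (p j)
    rw [hp j, hjl, hp l] at h
    linarith
  set S : Finset (Fin n) := Finset.image p Finset.univ with hS
  have hcard : S.card = k := by
    rw [hS, Finset.card_image_of_injective _ hinj, Finset.card_univ, Fintype.card_fin]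
  have hval : ∀ j : Fin k, A (p j) (p j) ≤ trMax (maxMul (maxMul Xᵀ A) X) := by
    intro j
    rw [value_eq A X hX.1]
    have h1 : A (p j) (p j) = X (p j) j * A (p j) (p j) * X (p j) j := by rw [hp j]; ring
    rw [h1]
    exact le_triple (fun j q pp => X pp j * A pp q * X q j) j (p j) (p j)
  haveI : Nonempty {x : Fin n // x ∈ S} := ⟨⟨p (Classical.arbitrary _), by
    simp [hS]⟩⟩
  refine le_trans (ciInf_le (Set.Finite.bddBelow (Set.finite_range _)) ⟨S, hcard⟩) ?_
  refine ciSup_le fun x => ?_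
  obtain ⟨j, _, hj⟩ := Finset.mem_image.1 x.2
  exact hj ▸ hval j

/-- The gadget matrix: indicator columns at pivots `p`, with column `j0` augmented by `s • e`. -/
private noncomputable def gX (p : Fin k → Fin n) (j0 : Fin k) (e : Fin n → ℝ) (s : ℝ) :
    Matrix (Fin n) (Fin k) ℝ :=
  Matrix.of fun i j => if i = p j then 1 else if j = j0 then s * e i else 0

private lemma gX_apply (p : Fin k → Fin n) (j0 : Fin k) (e : Fin n → ℝ) (s : ℝ)
    (i : Fin n) (j : Fin k) :
    gX p j0 e s i j = if i = p j then 1 else if j = j0 then s * e i else 0 := rfl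

variable {A : Matrix (Fin n) (Fin n) ℝ} {p : Fin k → Fin n} {e : Fin n → ℝ} {s : ℝ}

private lemma gX_nonneg (j0 : Fin k) (he0 : ∀ i, 0 ≤ e i) (hs0 : 0 ≤ s) :
    ∀ i j, 0 ≤ gX p j0 e s i j := by
  intro i j
  rw [gX_apply]
  split_ifs
  · exact zero_le_one
  · exact mul_nonneg hs0 (he0 i)
  · exact le_refl 0

private lemma gX_le_one (j0 : Fin k) (he0 : ∀ i, 0 ≤ e i) (he1 : ∀ i, e i ≤ 1)
    (hs0 : 0 ≤ s) (hs1 : s ≤ 1) :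
    ∀ i j, gX p j0 e s i j ≤ 1 := by
  intro i j
  rw [gX_apply]
  split_ifs
  · exact le_refl 1
  · nlinarith [he0 i, he1 i]
  · exact zero_le_one

private lemma gX_mem [NeZero n] (hp : Function.Injective p) (j0 : Fin k)
    (he0 : ∀ i, 0 ≤ e i) (he1 : ∀ i, e i ≤ 1) (hep : ∀ j, e (p j) = 0)
    (hs0 : 0 ≤ s) (hs1 : s ≤ 1) : gX p j0 e s ∈ Xset n k := by
  refine ⟨gX_nonneg j0 he0 hs0, ?_⟩
  ext j l
  simp only [maxMul, Matrix.of_apply, Matrix.transpose_apply]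
  by_cases hjl : j = l
  · subst hjl
    rw [Matrix.one_apply_eq]
    refine le_antisymm (ciSup_le fun i => ?_) ?_
    · nlinarith [gX_nonneg (p := p) (e := e) (s := s) j0 he0 hs0 i j,
        gX_le_one (p := p) (e := e) (s := s) j0 he0 he1 hs0 hs1 i j]
    · have h1 : gX p j0 e s (p j) j = 1 := by rw [gX_apply, if_pos rfl]
      calc (1:ℝ) = gX p j0 e s (p j) j * gX p j0 e s (p j) j := by rw [h1]; ring
        _ ≤ _ := le_csup (fun i => gX p j0 e s i j * gX p j0 e s i j) (p j)
  · rw [Matrix.one_apply_ne hjl]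
    have hz : ∀ i, gX p j0 e s i j * gX p j0 e s i l = 0 := by
      intro i
      rw [gX_apply, gX_apply]
      rcases eq_or_ne i (p j) with h1 | h1 <;> rcases eq_or_ne i (p l) with h2 | h2
      · exact absurd (hp (h1 ▸ h2)) hjl
      · rw [if_pos h1, if_neg h2]
        rcases eq_or_ne l j0 with h3 | h3
        · rw [if_pos h3, h1, hep j]; ring
        · rw [if_neg h3]; ring
      · rw [if_neg h1, if_pos h2]
        rcases eq_or_ne j j0 with h3 | h3
        · rw [if_pos h3, h2, hep l]; ring
        · rw [if_neg h3]; ring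
      · rw [if_neg h1, if_neg h2]
        rcases eq_or_ne j j0 with h3 | h3
        · have h4 : l ≠ j0 := fun h => hjl (h3.trans h.symm)
          rw [if_neg h4]; ring
        · rw [if_neg h3]; ring
    calc (⨆ i, gX p j0 e s i j * gX p j0 e s i l) = ⨆ _ : Fin n, (0:ℝ) :=
          iSup_congr hz
      _ = 0 := ciSup_const

private lemma gX_val [NeZero n] [NeZero k] (hA : ∀ i j, 0 ≤ A i j)
    (hp : Function.Injective p) (j0 : Fin k)
    (he0 : ∀ i, 0 ≤ e i) (he1 : ∀ i, e i ≤ 1) (hep : ∀ j, e (p j) = 0)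
    (hs0 : 0 ≤ s) (hs1 : s ≤ 1) :
    trMax (maxMul (maxMul (gX p j0 e s)ᵀ A) (gX p j0 e s)) =
      max (⨆ j, A (p j) (p j))
        (max (s * max (⨆ q, e q * A (p j0) q) (⨆ q, e q * A q (p j0)))
          (s ^ 2 * ⨆ pp, ⨆ q, e pp * (e q * A pp q))) := by
  set X := gX p j0 e s with hXdef
  have hXnn : ∀ i j, 0 ≤ X i j := gX_nonneg j0 he0 hs0
  have hpv : ∀ j, X (p j) j = 1 := fun j => by rw [hXdef, gX_apply, if_pos rfl]
  have hD0 : (0:ℝ) ≤ ⨆ j, A (p j) (p j) := csup_nonneg fun j => hA _ _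
  rw [value_eq A X hXnn]
  apply le_antisymm
  · refine ciSup_le fun j => ciSup_le fun q => ciSup_le fun pp => ?_
    rcases eq_or_ne pp (p j) with h1 | h1
    · have hX1 : X pp j = 1 := by rw [hXdef, gX_apply, if_pos h1]
      rcases eq_or_ne q (p j) with h2 | h2
      · have hX2 : X q j = 1 := by rw [hXdef, gX_apply, if_pos h2]
        rw [hX1, hX2, h1, h2, one_mul, mul_one]
        exact le_trans (le_csup (fun j => A (p j) (p j)) j) (le_max_left _ _)
      · rcases eq_or_ne j j0 with h3 | h3
        · have hX2 : X q j = s * e q := by rw [hXdef, gX_apply, if_neg h2, if_pos h3]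
          rw [hX1, hX2, h1, h3]
          have heq : (1:ℝ) * A (p j0) q * (s * e q) = s * (e q * A (p j0) q) := by ring
          rw [heq]
          have hb : e q * A (p j0) q
              ≤ max (⨆ q, e q * A (p j0) q) (⨆ q, e q * A q (p j0)) :=
            le_trans (le_csup (fun q => e q * A (p j0) q) q) (le_max_left _ _)
          exact le_trans (mul_le_mul_of_nonneg_left hb hs0)
            (le_trans (le_max_left _ _) (le_max_right _ _))
        · have hX2 : X q j = 0 := by rw [hXdef, gX_apply, if_neg h2, if_neg h3]
          rw [hX2, mul_zero]
          exact le_trans hD0 (le_max_left _ _)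
    · rcases eq_or_ne j j0 with h3 | h3
      · have hX1 : X pp j = s * e pp := by rw [hXdef, gX_apply, if_neg h1, if_pos h3]
        rcases eq_or_ne q (p j) with h2 | h2
        · have hX2 : X q j = 1 := by rw [hXdef, gX_apply, if_pos h2]
          rw [hX1, hX2, h2, h3]
          have heq : s * e pp * A pp (p j0) * 1 = s * (e pp * A pp (p j0)) := by ring
          rw [heq]
          have hb : e pp * A pp (p j0)
              ≤ max (⨆ q, e q * A (p j0) q) (⨆ q, e q * A q (p j0)) :=
            le_trans (le_csup (fun q => e q * A q (p j0)) pp) (le_max_right _ _)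
          exact le_trans (mul_le_mul_of_nonneg_left hb hs0)
            (le_trans (le_max_left _ _) (le_max_right _ _))
        · have hX2 : X q j = s * e q := by rw [hXdef, gX_apply, if_neg h2, if_pos h3]
          rw [hX1, hX2]
          have heq : s * e pp * A pp q * (s * e q) = s ^ 2 * (e pp * (e q * A pp q)) := by
            ring
          rw [heq]
          have hb : e pp * (e q * A pp q) ≤ ⨆ pp, ⨆ q, e pp * (e q * A pp q) :=
            le_trans (le_csup (fun q => e pp * (e q * A pp q)) q)
              (le_csup (fun pp => ⨆ q, e pp * (e q * A pp q)) pp)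
          exact le_trans (mul_le_mul_of_nonneg_left hb (sq_nonneg s))
            (le_trans (le_max_right _ _) (le_max_right _ _))
      · have hX1 : X pp j = 0 := by rw [hXdef, gX_apply, if_neg h1, if_neg h3]
        rw [hX1, zero_mul, zero_mul]
        exact le_trans hD0 (le_max_left _ _)
  · refine max_le ?_ (max_le ?_ ?_)
    · refine ciSup_le fun j => ?_
      have heq : A (p j) (p j) = X (p j) j * A (p j) (p j) * X (p j) j := by
        rw [hpv j]; ring
      rw [heq]
      exact le_triple (fun j q pp => X pp j * A pp q * X q j) j (p j) (p j)
    · rw [mul_max_of_nonneg _ _ hs0]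
      refine max_le ?_ ?_
      · rw [Real.mul_iSup_of_nonneg hs0]
        refine ciSup_le fun q => ?_
        refine le_trans ?_ (le_triple (fun j q pp => X pp j * A pp q * X q j) j0 q (p j0))
        show s * (e q * A (p j0) q) ≤ X (p j0) j0 * A (p j0) q * X q j0
        rcases eq_or_ne q (p j0) with h2 | h2
        · rw [h2, hep j0, hpv j0]
          have : s * (0 * A (p j0) (p j0)) = 0 := by ring
          rw [this]
          exact mul_nonneg (mul_nonneg zero_le_one (hA _ _)) zero_le_one
        · have hX2 : X q j0 = s * e q := by rw [hXdef, gX_apply, if_neg h2, if_pos rfl]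
          rw [hpv j0, hX2]; exact le_of_eq (by ring)
      · rw [Real.mul_iSup_of_nonneg hs0]
        refine ciSup_le fun q => ?_
        refine le_trans ?_ (le_triple (fun j q pp => X pp j * A pp q * X q j) j0 (p j0) q)
        show s * (e q * A q (p j0)) ≤ X q j0 * A q (p j0) * X (p j0) j0
        rcases eq_or_ne q (p j0) with h2 | h2
        · rw [h2, hep j0, hpv j0]
          have : s * (0 * A (p j0) (p j0)) = 0 := by ring
          rw [this]
          exact mul_nonneg (mul_nonneg zero_le_one (hA _ _)) zero_le_one
        · have hX2 : X q j0 = s * e q := by rw [hXdef, gX_apply, if_neg h2, if_pos rfl]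
          rw [hpv j0, hX2]; exact le_of_eq (by ring)
    · rw [Real.mul_iSup_of_nonneg (sq_nonneg s)]
      refine ciSup_le fun pp => ?_
      rw [Real.mul_iSup_of_nonneg (sq_nonneg s)]
      refine ciSup_le fun q => ?_
      refine le_trans ?_ (le_triple (fun j q pp => X pp j * A pp q * X q j) j0 q pp)
      show s ^ 2 * (e pp * (e q * A pp q)) ≤ X pp j0 * A pp q * X q j0
      have hrhs : 0 ≤ X pp j0 * A pp q * X q j0 :=
        mul_nonneg (mul_nonneg (hXnn pp j0) (hA pp q)) (hXnn q j0)
      rcases eq_or_ne pp (p j0) with h1 | h1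
      · rw [h1, hep j0]
        have : s ^ 2 * (0 * (e q * A (p j0) q)) = 0 := by ring
        rw [this]; exact mul_nonneg (mul_nonneg (hXnn _ _) (hA _ _)) (hXnn _ _)
      · rcases eq_or_ne q (p j0) with h2 | h2
        · rw [h2, hep j0]
          have : s ^ 2 * (e pp * (0 * A pp (p j0))) = 0 := by ring
          rw [this]; exact mul_nonneg (mul_nonneg (hXnn _ _) (hA _ _)) (hXnn _ _)
        · have hX1 : X pp j0 = s * e pp := by rw [hXdef, gX_apply, if_neg h1, if_pos rfl]
          have hX2 : X q j0 = s * e q := by rw [hXdef, gX_apply, if_neg h2, if_pos rfl]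
          rw [hX1, hX2]; exact le_of_eq (by ring)

private lemma gadget_mem [NeZero n] [NeZero k] (hA : ∀ i j, 0 ≤ A i j)
    (hp : Function.Injective p) (j0 : Fin k)
    (he0 : ∀ i, 0 ≤ e i) (he1 : ∀ i, e i ≤ 1) (hep : ∀ j, e (p j) = 0)
    {t : ℝ} (h1 : (⨆ j, A (p j) (p j)) ≤ t)
    (h2 : t ≤ max (⨆ j, A (p j) (p j))
        (max (max (⨆ q, e q * A (p j0) q) (⨆ q, e q * A q (p j0)))
          (⨆ pp, ⨆ q, e pp * (e q * A pp q)))) :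
    t ∈ Wmax k A := by
  set D := ⨆ j, A (p j) (p j) with hD
  set B := max (⨆ q, e q * A (p j0) q) (⨆ q, e q * A q (p j0)) with hB
  set C := ⨆ pp, ⨆ q, e pp * (e q * A pp q) with hC
  have hD0 : 0 ≤ D := csup_nonneg fun j => hA _ _
  set φ : ℝ → ℝ := fun s => max D (max (s * B) (s ^ 2 * C)) with hφ
  have hcont : ContinuousOn φ (Set.Icc (0:ℝ) 1) := by
    apply Continuous.continuousOn
    fun_prop
  have hφ0 : φ 0 = D := by
    simp only [hφ, zero_mul, ne_eq, OfNat.ofNat_ne_zero, not_false_eq_true, zero_pow, max_self]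
    exact max_eq_left hD0
  have hφ1 : φ 1 = max D (max B C) := by simp [hφ]
  have hsub := intermediate_value_Icc (zero_le_one (α := ℝ)) hcont
  have ht : t ∈ Set.Icc (φ 0) (φ 1) := by
    rw [hφ0, hφ1]
    exact ⟨h1, h2⟩
  obtain ⟨s, hs, hst⟩ := hsub ht
  exact ⟨gX p j0 e s, gX_mem hp j0 he0 he1 hep hs.1 hs.2,
    ((gX_val hA hp j0 he0 he1 hep hs.1 hs.2).trans hst).symm⟩

private lemma exists_enum [NeZero k] {S : Finset (Fin n)} (hcard : S.card = k) {x : Fin n}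
    (hx : x ∈ S) (j0 : Fin k) :
    ∃ p : Fin k → Fin n, Function.Injective p ∧ (∀ j, p j ∈ S) ∧ p j0 = x ∧
      ∀ y ∈ S, ∃ j, p j = y := by
  have eqv : Fin k ≃ {y // y ∈ S} := (finCongr hcard.symm).trans S.equivFin.symm
  let i : Fin k := eqv.symm ⟨x, hx⟩
  let q : Fin k ≃ {y // y ∈ S} := (Equiv.swap j0 i).trans eqv
  refine ⟨fun j => (q j).1, ?_, fun j => (q j).2, ?_, ?_⟩
  · intro a b hab
    exact q.injective (Subtype.ext hab)
  · show (q j0).1 = x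
    simp only [q, Equiv.trans_apply, Equiv.swap_apply_left, i, Equiv.apply_symm_apply]
  · intro y hy
    exact ⟨q.symm ⟨y, hy⟩, congrArg Subtype.val (q.apply_symm_apply ⟨y, hy⟩)⟩

end Aux

/-- For a nonnegative `n × n` matrix `A` and `1 ≤ k < n`,
`W_max^k(A) = [c, d]` with `c = min over k-element subsets S of max_{j ∈ S} a_{jj}` and
`d = max_{i,j} a_{ij}`. -/
theorem stmt_2 {n k : ℕ} (hk : 1 ≤ k) (hkn : k < n)
    (A : Matrix (Fin n) (Fin n) ℝ) (hA : ∀ i j, 0 ≤ A i j) :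
    Wmax k A = Set.Icc
      (⨅ S : {S : Finset (Fin n) // S.card = k}, ⨆ j : {x : Fin n // x ∈ S.1}, A j.1 j.1)
      (⨆ i, ⨆ j, A i j) := by
  haveI : NeZero k := ⟨by omega⟩
  haveI : NeZero n := ⟨by omega⟩
  apply Set.Subset.antisymm
  · rintro z ⟨X, hX, rfl⟩
    exact ⟨c_le_val A hX, val_le_d A hA hX⟩
  · rintro t ⟨ht1, ht2⟩
    haveI hSne : Nonempty {S : Finset (Fin n) // S.card = k} := by
      obtain ⟨T, _, hTcard⟩ := Finset.exists_subset_card_eq (s := (Finset.univ : Finset (Fin n))) (n := k)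
        (by rw [Finset.card_univ, Fintype.card_fin]; omega)
      exact ⟨⟨T, hTcard⟩⟩
    obtain ⟨S₀, hS₀⟩ := Finite.exists_min
      (fun S : {S : Finset (Fin n) // S.card = k} => ⨆ j : {x : Fin n // x ∈ S.1}, A j.1 j.1)
    haveI : Nonempty {x : Fin n // x ∈ S₀.1} := by
      obtain ⟨x, hx⟩ := Finset.card_pos.1 (by rw [S₀.2]; omega)
      exact ⟨⟨x, hx⟩⟩
    have hc : (⨅ S : {S : Finset (Fin n) // S.card = k},
        ⨆ j : {x : Fin n // x ∈ S.1}, A j.1 j.1)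
        = ⨆ j : {x : Fin n // x ∈ S₀.1}, A j.1 j.1 :=
      le_antisymm (ciInf_le (Set.Finite.bddBelow (Set.finite_range _)) S₀) (le_ciInf hS₀)
    have hxc : ∀ x ∈ S₀.1, A x x ≤ t := fun x hx =>
      le_trans (le_trans (le_csup (fun y : {y : Fin n // y ∈ S₀.1} => A y.1 y.1) ⟨x, hx⟩)
        hc.ge) ht1
    obtain ⟨⟨a, b⟩, hmax⟩ := Finite.exists_max (fun pq : Fin n × Fin n => A pq.1 pq.2)
    have hd : (⨆ i, ⨆ j, A i j) = A a b :=
      le_antisymm (ciSup_le fun i => ciSup_le fun j => hmax (i, j))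
        (le_trans (le_csup (fun j => A a j) b) (le_csup (fun i => ⨆ j, A i j) a))
    rw [hd] at ht2
    set z0 : Fin k := ⟨0, by omega⟩ with hz0
    by_cases ha : a ∈ S₀.1
    · by_cases hb : b ∈ S₀.1
      · by_cases hab : a = b
        · -- a = b, both in S₀ : t ≤ A a a ≤ D
          obtain ⟨p, hpinj, hpS, hpj0, hpsurj⟩ := exists_enum S₀.2 ha z0
          refine gadget_mem hA hpinj z0 (e := fun _ => (0:ℝ)) (fun i => le_refl 0)
            (fun i => zero_le_one) (fun j => rfl)
            (ciSup_le fun j => hxc (p j) (hpS j)) ?_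
          obtain ⟨j, hj⟩ := hpsurj a ha
          refine le_trans ht2 (le_trans ?_ (le_max_left _ _))
          calc A a b = A (p j) (p j) := by rw [hj, ← hab]
            _ ≤ _ := le_csup (fun j => A (p j) (p j)) j
        · -- a ≠ b, both in S₀
          obtain ⟨r, hr⟩ : ∃ r, r ∉ S₀.1 := by
            by_contra h
            push_neg at h
            have h2 : S₀.1 = Finset.univ := Finset.eq_univ_iff_forall.2 h
            have h3 := S₀.2
            rw [h2, Finset.card_univ, Fintype.card_fin] at h3
            omega
          obtain ⟨p1, hp1inj, hp1S, hp1j0, hp1surj⟩ := exists_enum S₀.2 hb z0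
          set e1 : Fin n → ℝ := fun i => if i = r then 1 else 0 with he1def
          have he10 : ∀ i, 0 ≤ e1 i := fun i => by dsimp [e1]; split_ifs <;> norm_num
          have he11 : ∀ i, e1 i ≤ 1 := fun i => by dsimp [e1]; split_ifs <;> norm_num
          have he1p : ∀ j, e1 (p1 j) = 0 := fun j => by
            dsimp [e1]
            have hne : p1 j ≠ r := fun h => hr (h ▸ hp1S j)
            rw [if_neg hne]
          set v1 := max (⨆ j, A (p1 j) (p1 j))
            (max (max (⨆ q, e1 q * A (p1 z0) q) (⨆ q, e1 q * A q (p1 z0)))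
              (⨆ pp, ⨆ q, e1 pp * (e1 q * A pp q))) with hv1
          by_cases htv : t ≤ v1
          · exact gadget_mem hA hp1inj z0 he10 he11 he1p
              (ciSup_le fun j => hxc (p1 j) (hp1S j)) htv
          · push_neg at htv
            set S' : Finset (Fin n) := insert r (S₀.1.erase b) with hS'
            have hS'card : S'.card = k := by
              rw [hS', Finset.card_insert_of_notMem fun h => hr (Finset.mem_of_mem_erase h),
                Finset.card_erase_of_mem hb, S₀.2]
              have := Finset.one_le_card.2 ⟨b, hb⟩
              rw [S₀.2] at this
              omega
            have haS' : a ∈ S' := Finset.mem_insert_of_mem (Finset.mem_erase.2 ⟨hab, ha⟩)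
            obtain ⟨p2, hp2inj, hp2S, hp2j0, hp2surj⟩ := exists_enum hS'card haS' z0
            set e2 : Fin n → ℝ := fun i => if i = b then 1 else 0 with he2def
            have he20 : ∀ i, 0 ≤ e2 i := fun i => by dsimp [e2]; split_ifs <;> norm_num
            have he21 : ∀ i, e2 i ≤ 1 := fun i => by dsimp [e2]; split_ifs <;> norm_num
            have hbS' : b ∉ S' := by
              rw [hS']
              intro h
              rcases Finset.mem_insert.1 h with h | h
              · exact hr (h ▸ hb)
              · exact (Finset.mem_erase.1 h).1 rfl
            have he2p : ∀ j, e2 (p2 j) = 0 := fun j => by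
              dsimp [e2]
              have hne : p2 j ≠ b := fun h => hbS' (h ▸ hp2S j)
              rw [if_neg hne]
            have hrr : A r r ≤ v1 := by
              rw [hv1]
              refine le_trans ?_ (le_trans (le_max_right _ _) (le_max_right _ _))
              calc A r r = e1 r * (e1 r * A r r) := by dsimp [e1]; rw [if_pos rfl]; ring
                _ ≤ ⨆ q, e1 r * (e1 q * A r q) :=
                    le_csup (fun q => e1 r * (e1 q * A r q)) r
                _ ≤ _ := le_csup (fun pp => ⨆ q, e1 pp * (e1 q * A pp q)) r
            have h1' : (⨆ j, A (p2 j) (p2 j)) ≤ t := by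
              refine ciSup_le fun j => ?_
              have hmem := hp2S j
              rw [hS', Finset.mem_insert] at hmem
              rcases hmem with h | h
              · rw [h]; exact le_trans hrr (le_of_lt htv)
              · exact hxc _ (Finset.mem_of_mem_erase h)
            refine gadget_mem hA hp2inj z0 he20 he21 he2p h1' ?_
            refine le_trans ht2 (le_trans ?_
              (le_trans (le_max_left _ _) (le_trans (le_max_left _ _) (le_max_right _ _))))
            calc A a b = e2 b * A (p2 z0) b := by
                  dsimp [e2]; rw [if_pos rfl, hp2j0]; ring
              _ ≤ _ := le_csup (fun q => e2 q * A (p2 z0) q) b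
      · -- a ∈ S₀, b ∉ S₀
        obtain ⟨p, hpinj, hpS, hpj0, _⟩ := exists_enum S₀.2 ha z0
        set e : Fin n → ℝ := fun i => if i = b then 1 else 0 with hedef
        have he0 : ∀ i, 0 ≤ e i := fun i => by dsimp [e]; split_ifs <;> norm_num
        have he1 : ∀ i, e i ≤ 1 := fun i => by dsimp [e]; split_ifs <;> norm_num
        have hep : ∀ j, e (p j) = 0 := fun j => by
          dsimp [e]
          have hne : p j ≠ b := fun h => hb (h ▸ hpS j)
          rw [if_neg hne]
        refine gadget_mem hA hpinj z0 he0 he1 hep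
          (ciSup_le fun j => hxc (p j) (hpS j)) ?_
        refine le_trans ht2 (le_trans ?_
          (le_trans (le_max_left _ _) (le_trans (le_max_left _ _) (le_max_right _ _))))
        calc A a b = e b * A (p z0) b := by dsimp [e]; rw [if_pos rfl, hpj0]; ring
          _ ≤ _ := le_csup (fun q => e q * A (p z0) q) b
    · by_cases hb : b ∈ S₀.1
      · -- a ∉ S₀, b ∈ S₀
        obtain ⟨p, hpinj, hpS, hpj0, _⟩ := exists_enum S₀.2 hb z0
        set e : Fin n → ℝ := fun i => if i = a then 1 else 0 with hedef
        have he0 : ∀ i, 0 ≤ e i := fun i => by dsimp [e]; split_ifs <;> norm_num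
        have he1 : ∀ i, e i ≤ 1 := fun i => by dsimp [e]; split_ifs <;> norm_num
        have hep : ∀ j, e (p j) = 0 := fun j => by
          dsimp [e]
          have hne : p j ≠ a := fun h => ha (h ▸ hpS j)
          rw [if_neg hne]
        refine gadget_mem hA hpinj z0 he0 he1 hep
          (ciSup_le fun j => hxc (p j) (hpS j)) ?_
        refine le_trans ht2 (le_trans ?_
          (le_trans (le_max_right _ _) (le_trans (le_max_left _ _) (le_max_right _ _))))
        calc A a b = e a * A a (p z0) := by dsimp [e]; rw [if_pos rfl, hpj0]; ring
          _ ≤ _ := le_csup (fun q => e q * A q (p z0)) a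
      · -- a ∉ S₀, b ∉ S₀
        have hx0 : ∃ x, x ∈ S₀.1 := Finset.card_pos.1 (by rw [S₀.2]; omega)
        obtain ⟨x, hx⟩ := hx0
        obtain ⟨p, hpinj, hpS, hpj0, _⟩ := exists_enum S₀.2 hx z0
        set e : Fin n → ℝ := fun i => if i = a ∨ i = b then 1 else 0 with hedef
        have he0 : ∀ i, 0 ≤ e i := fun i => by dsimp [e]; split_ifs <;> norm_num
        have he1 : ∀ i, e i ≤ 1 := fun i => by dsimp [e]; split_ifs <;> norm_num
        have hep : ∀ j, e (p j) = 0 := fun j => by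
          dsimp [e]
          rw [if_neg]
          rintro (h | h)
          · exact ha (h ▸ hpS j)
          · exact hb (h ▸ hpS j)
        refine gadget_mem hA hpinj z0 he0 he1 hep
          (ciSup_le fun j => hxc (p j) (hpS j)) ?_
        refine le_trans ht2 (le_trans ?_
          (le_trans (le_max_right _ _) (le_max_right _ _)))
        calc A a b = e a * (e b * A a b) := by
              dsimp [e]; rw [if_pos (Or.inl rfl), if_pos (Or.inr rfl)]; ring
          _ ≤ ⨆ q, e a * (e q * A a q) := le_csup (fun q => e a * (e q * A a q)) b
          _ ≤ _ := le_csup (fun pp => ⨆ q, e pp * (e q * A pp q)) a
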